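/- Let N ≥ 2 and let x ∈ ℂ^N satisfy x[1] ≠ 0. If y ∈ ℂ^N is such that the Hermitian matrix X = x y* + y x* satisfies trace(ψ_{m,n} ψ_{m,n}* · X) = 0 for all m = 1,…,4 and n = 1,…,N−1, then X = 0. (Theorem 6, part 2: the restriction of A_Ψ to the tangent space T_x = {x y* + y x* : y ∈ ℂ^N} is injective for every x ∈ S_Ψ.) -/

import Mathlib

open Complex Matrix MeasureTheory

noncomputable section

/-- α = √((1 − 1/√3)/2) -/
def alph : ℂ := (Real.sqrt ((1 - 1/Real.sqrt 3)/2) : ℝ)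

/-- β = e^{i5π/4}·√((1 + 1/√3)/2) -/
def beta : ℂ := Complex.exp (Complex.I * (5 * (Real.pi : ℂ) / 4)) *
  (Real.sqrt ((1 + 1/Real.sqrt 3)/2) : ℝ)

/-- the four frame vectors a₁ = (α,β), a₂ = (β,α), a₃ = (α,−β), a₄ = (−β,α) in ℂ² -/
def coef : Fin 4 → Fin 2 → ℂ := ![![alph, beta], ![beta, alph], ![alph, -beta], ![-beta, alph]]

/-- inner product ⟨x,y⟩ = Σ x[n]·conj(y[n]) -/
def inn {N : ℕ} (x y : Fin N → ℂ) : ℂ := ∑ i, x i * (starRingEnd ℂ) (y i)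

/-- Euclidean norm ‖x‖ = √⟨x,x⟩ -/
def nrm {N : ℕ} (x : Fin N → ℂ) : ℝ := Real.sqrt (inn x x).re

/-- outer product x y* -/
def outer {N : ℕ} (x y : Fin N → ℂ) : Matrix (Fin N) (Fin N) ℂ :=
  fun i j => x i * (starRingEnd ℂ) (y j)

/-- measurement vectors φ_{m,n} (0-based n: nonzero entries at positions n and n+1) -/
def phiv (N : ℕ) (m : Fin 4) (n : ℕ) : Fin N → ℂ :=
  fun i => if (i : ℕ) = n then coef m 0 else if (i : ℕ) = n + 1 then coef m 1 else 0

/-- measurement vectors ψ_{m,n} (0-based n: nonzero entries at positions 0 and n+1) -/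
def psiv (N : ℕ) (m : Fin 4) (n : ℕ) : Fin N → ℂ :=
  fun i => if (i : ℕ) = 0 then coef m 0 else if (i : ℕ) = n + 1 then coef m 1 else 0

/-- Hilbert–Schmidt inner product ⟨X,Y⟩ = trace(Y*X) -/
def hs {N : ℕ} (X Y : Matrix (Fin N) (Fin N) ℂ) : ℂ := Matrix.trace (Yᴴ * X)

/-- Frobenius (Hilbert–Schmidt) norm -/
def frob {N : ℕ} (X : Matrix (Fin N) (Fin N) ℂ) : ℝ := Real.sqrt (Matrix.trace (Xᴴ * X)).re

/-- spectral norm (largest singular value) -/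
def specNorm {N : ℕ} (A : Matrix (Fin N) (Fin N) ℂ) : ℝ :=
  sSup {r : ℝ | ∃ v : Fin N → ℂ, nrm v ≤ 1 ∧ r = nrm (A.mulVec v)}
-- numeric lemmas
lemma TI_s3_gt_one : (1:ℝ) < Real.sqrt 3 := by
  nlinarith [Real.sq_sqrt (by norm_num : (0:ℝ) ≤ 3), Real.sqrt_nonneg 3]

lemma TI_A_pos : (0:ℝ) < (1 - 1/Real.sqrt 3)/2 := by
  have h : 1/Real.sqrt 3 < 1 := by
    rw [div_lt_one (by positivity)]; exact TI_s3_gt_one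
  linarith

lemma TI_B_pos : (0:ℝ) < (1 + 1/Real.sqrt 3)/2 := by
  have h : 0 < 1/Real.sqrt 3 := by positivity
  linarith

lemma TI_conj_alph : (starRingEnd ℂ) alph = alph := Complex.conj_ofReal _

lemma TI_alph_mul : alph * alph = (((1 - 1/Real.sqrt 3)/2 : ℝ) : ℂ) := by
  unfold alph
  rw [← Complex.ofReal_mul, Real.mul_self_sqrt TI_A_pos.le]

lemma TI_alph_ne : alph ≠ 0 := by
  unfold alph
  exact_mod_cast (Real.sqrt_pos.mpr TI_A_pos).ne'

lemma TI_beta_mul_conj : beta * (starRingEnd ℂ) beta = (((1 + 1/Real.sqrt 3)/2 : ℝ) : ℂ) := by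
  rw [Complex.mul_conj]
  unfold beta
  rw [show Complex.I * (5 * (Real.pi:ℂ)/4) = ((5*Real.pi/4 : ℝ):ℂ) * Complex.I by push_cast; ring]
  rw [Complex.normSq_mul, Complex.normSq_eq_norm_sq, Complex.norm_exp_ofReal_mul_I, one_pow,
    one_mul, Complex.normSq_ofReal, Real.mul_self_sqrt TI_B_pos.le]

lemma TI_beta_sq : beta * beta = Complex.I * (((1 + 1/Real.sqrt 3)/2 : ℝ) : ℂ) := by
  unfold beta
  rw [mul_mul_mul_comm, ← Complex.exp_add, ← Complex.ofReal_mul,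
    Real.mul_self_sqrt TI_B_pos.le]
  congr 1
  rw [show Complex.I * (5 * (Real.pi:ℂ)/4) + Complex.I * (5 * (Real.pi:ℂ)/4)
      = ((Real.pi/2 : ℝ):ℂ) * Complex.I + 2 * (Real.pi:ℂ) * Complex.I by push_cast; ring]
  rw [Complex.exp_add, Complex.exp_two_pi_mul_I, mul_one, Complex.exp_mul_I,
    ← Complex.ofReal_cos, ← Complex.ofReal_sin, Real.cos_pi_div_two, Real.sin_pi_div_two]
  simp

lemma TI_conj_beta_sq :
    (starRingEnd ℂ) beta * (starRingEnd ℂ) beta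
      = -Complex.I * (((1 + 1/Real.sqrt 3)/2 : ℝ) : ℂ) := by
  rw [← _root_.map_mul, TI_beta_sq, _root_.map_mul, Complex.conj_I, Complex.conj_ofReal]

lemma TI_block_zero (x0 xk y0 yk : ℂ)
    (h : ∀ m : Fin 4,
      (x0 * (starRingEnd ℂ) (coef m 0) + xk * (starRingEnd ℂ) (coef m 1)) *
        (starRingEnd ℂ) (y0 * (starRingEnd ℂ) (coef m 0) + yk * (starRingEnd ℂ) (coef m 1)) +
      (y0 * (starRingEnd ℂ) (coef m 0) + yk * (starRingEnd ℂ) (coef m 1)) *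
        (starRingEnd ℂ) (x0 * (starRingEnd ℂ) (coef m 0) + xk * (starRingEnd ℂ) (coef m 1)) = 0) :
    x0 * (starRingEnd ℂ) y0 + y0 * (starRingEnd ℂ) x0 = 0 ∧
    x0 * (starRingEnd ℂ) yk + y0 * (starRingEnd ℂ) xk = 0 := by
  have h1 := h 0
  have h2 := h 1
  have h3 := h 2
  have h4 := h 3
  simp only [show coef 0 0 = alph from rfl, show coef 0 1 = beta from rfl,
    show coef 1 0 = beta from rfl, show coef 1 1 = alph from rfl,
    show coef 2 0 = alph from rfl, show coef 2 1 = -beta from rfl,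
    show coef 3 0 = -beta from rfl, show coef 3 1 = alph from rfl,
    map_add, _root_.map_mul, map_neg, Complex.conj_conj, TI_conj_alph] at h1 h2 h3 h4
  have hP : ((alph*alph)*(alph*alph) - (beta*(starRingEnd ℂ) beta)*(beta*(starRingEnd ℂ) beta)) *
      (x0 * (starRingEnd ℂ) y0 + y0 * (starRingEnd ℂ) x0) = 0 := by
    linear_combination (alph*alph/2) * h1 + (alph*alph/2) * h3
      - (beta*(starRingEnd ℂ) beta/2) * h2 - (beta*(starRingEnd ℂ) beta/2) * h4
  have hQ : (2*alph*(beta*beta - (starRingEnd ℂ) beta * (starRingEnd ℂ) beta)) *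
      (x0 * (starRingEnd ℂ) yk + y0 * (starRingEnd ℂ) xk) = 0 := by
    linear_combination beta * h1 - beta * h3 - (starRingEnd ℂ) beta * h2 + (starRingEnd ℂ) beta * h4
  have cP : ((alph*alph)*(alph*alph) - (beta*(starRingEnd ℂ) beta)*(beta*(starRingEnd ℂ) beta)) ≠ 0 := by
    rw [TI_alph_mul, TI_beta_mul_conj, ← Complex.ofReal_mul, ← Complex.ofReal_mul,
      ← Complex.ofReal_sub, Complex.ofReal_ne_zero]
    have h0 : 0 < 1/Real.sqrt 3 := by positivity
    have : ((1 - 1/Real.sqrt 3)/2) * ((1 - 1/Real.sqrt 3)/2)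
        - ((1 + 1/Real.sqrt 3)/2) * ((1 + 1/Real.sqrt 3)/2) < 0 := by nlinarith
    exact this.ne
  have cQ : (2*alph*(beta*beta - (starRingEnd ℂ) beta * (starRingEnd ℂ) beta)) ≠ 0 := by
    rw [TI_beta_sq, TI_conj_beta_sq,
      show Complex.I * (((1 + 1/Real.sqrt 3)/2 : ℝ) : ℂ)
          - -Complex.I * (((1 + 1/Real.sqrt 3)/2 : ℝ) : ℂ)
        = 2 * Complex.I * (((1 + 1/Real.sqrt 3)/2 : ℝ) : ℂ) by ring]
    exact mul_ne_zero (mul_ne_zero two_ne_zero TI_alph_ne)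
      (mul_ne_zero (mul_ne_zero two_ne_zero Complex.I_ne_zero)
        (Complex.ofReal_ne_zero.mpr TI_B_pos.ne'))
  exact ⟨(mul_eq_zero.mp hP).resolve_left cP, (mul_eq_zero.mp hQ).resolve_left cQ⟩

lemma TI_trace_formula {N : ℕ} (ψ x y : Fin N → ℂ) :
    Matrix.trace (outer ψ ψ * (outer x y + outer y x)) =
      inn x ψ * (starRingEnd ℂ) (inn y ψ) + inn y ψ * (starRingEnd ℂ) (inn x ψ) := by
  simp only [Matrix.trace, Matrix.diag, Matrix.mul_apply, Matrix.add_apply]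
  unfold outer inn
  simp only [Matrix.trace, Matrix.diag, Matrix.mul_apply, Matrix.add_apply, map_sum,
    _root_.map_mul, Complex.conj_conj]
  rw [Finset.sum_mul_sum, Finset.sum_mul_sum, ← Finset.sum_add_distrib, Finset.sum_comm]
  refine Finset.sum_congr rfl fun j _ => ?_
  rw [← Finset.sum_add_distrib]
  refine Finset.sum_congr rfl fun i _ => by ring

lemma TI_inn_psiv {N : ℕ} (x : Fin N → ℂ) (m : Fin 4) (n : ℕ) (hn : n + 1 < N) :
    inn x (psiv N m n) =
      x ⟨0, by omega⟩ * (starRingEnd ℂ) (coef m 0)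
        + x ⟨n+1, hn⟩ * (starRingEnd ℂ) (coef m 1) := by
  unfold inn psiv
  have h0 : ((⟨0, by omega⟩ : Fin N) : ℕ) ≠ (⟨n+1, hn⟩ : Fin N) := by simp
  rw [← Finset.sum_subset
    (Finset.subset_univ ({(⟨0, by omega⟩ : Fin N), ⟨n+1, hn⟩} : Finset (Fin N)))]
  · rw [Finset.sum_pair (by simp [Fin.ext_iff])]
    simp
  · intro k _ hk
    simp only [Finset.mem_insert, Finset.mem_singleton, not_or] at hk
    have h1 : (k : ℕ) ≠ 0 := fun hc => hk.1 (Fin.ext hc)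
    have h2 : (k : ℕ) ≠ n + 1 := fun hc => hk.2 (Fin.ext hc)
    simp [h1, h2]

/-- Theorem 6 (part 2): for x ∈ S_Ψ the restriction of A_Ψ to the tangent space
T_x = {xy* + yx* : y ∈ ℂ^N} is injective. -/
theorem tangent_injective_Psi (N : ℕ) (hN : 2 ≤ N) (x : Fin N → ℂ)
    (hx : x ⟨0, by omega⟩ ≠ 0) (y : Fin N → ℂ)
    (hker : ∀ (m : Fin 4) (n : ℕ), n + 1 < N →
      Matrix.trace (outer (psiv N m n) (psiv N m n) * (outer x y + outer y x)) = 0) :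
    outer x y + outer y x = 0 := by
  have h0N : 0 < N := by omega
  have block : ∀ (n : ℕ) (hn : n + 1 < N),
      x ⟨0, h0N⟩ * (starRingEnd ℂ) (y ⟨0, h0N⟩)
          + y ⟨0, h0N⟩ * (starRingEnd ℂ) (x ⟨0, h0N⟩) = 0 ∧
      x ⟨0, h0N⟩ * (starRingEnd ℂ) (y ⟨n+1, hn⟩)
          + y ⟨0, h0N⟩ * (starRingEnd ℂ) (x ⟨n+1, hn⟩) = 0 := by
    intro n hn
    apply TI_block_zero
    intro m
    have h := hker m n hn
    rwa [TI_trace_formula, TI_inn_psiv x m n hn, TI_inn_psiv y m n hn] at h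
  have claimA : ∀ k : Fin N,
      x ⟨0, h0N⟩ * (starRingEnd ℂ) (y k) + y ⟨0, h0N⟩ * (starRingEnd ℂ) (x k) = 0 := by
    intro k
    rcases Nat.eq_zero_or_pos k.val with hk | hk
    · have hk' : k = ⟨0, h0N⟩ := Fin.ext hk
      rw [hk']
      exact (block 0 (by omega)).1
    · have hn : (k.val - 1) + 1 < N := by omega
      have hkk : (⟨k.val - 1 + 1, hn⟩ : Fin N) = k := Fin.ext (by simp; omega)
      have h := (block (k.val - 1) hn).2
      rwa [hkk] at h
  ext i j
  simp only [Matrix.add_apply, Matrix.zero_apply, outer]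
  have h1 := claimA j
  have h2 : (starRingEnd ℂ) (x ⟨0, h0N⟩) * y i + (starRingEnd ℂ) (y ⟨0, h0N⟩) * x i = 0 := by
    have h := congrArg (starRingEnd ℂ) (claimA i)
    simpa [map_add, _root_.map_mul, Complex.conj_conj] using h
  have h0 := claimA ⟨0, h0N⟩
  have key : (x i * (starRingEnd ℂ) (y j) + y i * (starRingEnd ℂ) (x j))
      * (x ⟨0, h0N⟩ * (starRingEnd ℂ) (x ⟨0, h0N⟩)) = 0 := by
    linear_combination (x i * (starRingEnd ℂ) (x ⟨0, h0N⟩)) * h1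
      + (x ⟨0, h0N⟩ * (starRingEnd ℂ) (x j)) * h2
      - (x i * (starRingEnd ℂ) (x j)) * h0
  have hx0 : x ⟨0, h0N⟩ ≠ 0 := hx
  have hx' : x ⟨0, h0N⟩ * (starRingEnd ℂ) (x ⟨0, h0N⟩) ≠ 0 :=
    mul_ne_zero hx0 (by simpa using hx0)
  exact (mul_eq_zero.mp key).resolve_right hx'
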